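/- Let $B$ be an abelian group and $\phi\colon B\to B$ an endomorphism. For every $n\geq 1$ there is an exact sequence $0 \to B[\phi^n]/\phi(B[\phi^{n+1}]) \to B/\phi B \xrightarrow{\phi^n} B/\phi^{n+1}B \to B/\phi^n B \to 0$. -/

import Mathlib

/-- For an endomorphism `φ` of an abelian group `B` and `n ≥ 1`, the sequence
`0 → B[φ^n]/φ(B[φ^(n+1)]) → B/φB → B/φ^(n+1)B → B/φ^nB → 0` is exact. -/
theorem phi_power_exact_sequence {B : Type*} [AddCommGroup B]
    (φ : AddMonoid.End B) (n : ℕ) (hn : 1 ≤ n) :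
    Function.Injective
      (QuotientAddGroup.map
        (((AddMonoidHom.ker (φ ^ (n + 1) : AddMonoid.End B)).map (φ : B →+ B)).addSubgroupOf
          (AddMonoidHom.ker (φ ^ n : AddMonoid.End B)))
        (φ : B →+ B).range (AddMonoidHom.ker (φ ^ n : AddMonoid.End B)).subtype
        (fun x hx => by
          rcases hx with ⟨b, _, hb⟩
          exact ⟨b, by simpa using hb⟩)) ∧
    Function.Exact
      (QuotientAddGroup.map
        (((AddMonoidHom.ker (φ ^ (n + 1) : AddMonoid.End B)).map (φ : B →+ B)).addSubgroupOf
          (AddMonoidHom.ker (φ ^ n : AddMonoid.End B)))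
        (φ : B →+ B).range (AddMonoidHom.ker (φ ^ n : AddMonoid.End B)).subtype
        (fun x hx => by
          rcases hx with ⟨b, _, hb⟩
          exact ⟨b, by simpa using hb⟩))
      (QuotientAddGroup.map (φ : B →+ B).range ((φ ^ (n + 1) : AddMonoid.End B) : B →+ B).range
        ((φ ^ n : AddMonoid.End B) : B →+ B)
        (fun x hx => by
          rcases hx with ⟨b, hb⟩
          refine ⟨b, ?_⟩
          subst hb
          show (φ ^ (n + 1)) b = (φ ^ n) (φ b)
          rw [pow_succ]
          rfl)) ∧
    Function.Exact
      (QuotientAddGroup.map (φ : B →+ B).range ((φ ^ (n + 1) : AddMonoid.End B) : B →+ B).range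
        ((φ ^ n : AddMonoid.End B) : B →+ B)
        (fun x hx => by
          rcases hx with ⟨b, hb⟩
          refine ⟨b, ?_⟩
          subst hb
          show (φ ^ (n + 1)) b = (φ ^ n) (φ b)
          rw [pow_succ]
          rfl))
      (QuotientAddGroup.map ((φ ^ (n + 1) : AddMonoid.End B) : B →+ B).range
        ((φ ^ n : AddMonoid.End B) : B →+ B).range (AddMonoidHom.id B)
        (fun x hx => by
          rcases hx with ⟨b, hb⟩
          refine ⟨φ b, ?_⟩
          subst hb
          show (φ ^ n) (φ b) = (φ ^ (n + 1)) b
          rw [pow_succ]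
          rfl)) ∧
    Function.Surjective
      (QuotientAddGroup.map ((φ ^ (n + 1) : AddMonoid.End B) : B →+ B).range
        ((φ ^ n : AddMonoid.End B) : B →+ B).range (AddMonoidHom.id B)
        (fun x hx => by
          rcases hx with ⟨b, hb⟩
          refine ⟨φ b, ?_⟩
          subst hb
          show (φ ^ n) (φ b) = (φ ^ (n + 1)) b
          rw [pow_succ]
          rfl)) := by
  have hpow : ∀ b : B, (φ ^ n) (φ b) = (φ ^ (n + 1)) b := fun b => by
    rw [pow_succ]; rfl
  refine ⟨?_, ?_, ?_, ?_⟩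
  · -- injectivity
    rw [injective_iff_map_eq_zero]
    intro x hx
    induction x using QuotientAddGroup.induction_on with
    | H x =>
      rw [QuotientAddGroup.map_mk, QuotientAddGroup.eq_zero_iff] at hx
      obtain ⟨b, hb⟩ := hx
      rw [QuotientAddGroup.eq_zero_iff]
      refine ⟨b, ?_, hb⟩
      show (φ ^ (n + 1)) b = 0
      rw [← hpow]
      exact ((congrArg (fun y => (φ ^ n) y) hb).trans x.2 : _)
  · -- exactness at B/φB
    intro y
    induction y using QuotientAddGroup.induction_on with
    | H b =>
      erw [QuotientAddGroup.map_mk, QuotientAddGroup.eq_zero_iff]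
      constructor
      · rintro ⟨c, hc⟩
        have hx : (φ ^ n) (b - φ c) = 0 := by
          rw [map_sub, hpow, show (φ ^ (n + 1)) c = (φ ^ n) b from hc, sub_self]
        refine ⟨QuotientAddGroup.mk ⟨b - φ c, hx⟩, ?_⟩
        rw [QuotientAddGroup.map_mk, QuotientAddGroup.eq]
        exact ⟨c, by simp; rfl⟩
      · rintro ⟨q, hq⟩
        induction q using QuotientAddGroup.induction_on with
        | H x =>
          rw [QuotientAddGroup.map_mk, QuotientAddGroup.eq] at hq
          obtain ⟨c, hc⟩ := hq
          refine ⟨c, ?_⟩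
          have hb : b = (x : B) + φ c := by
            simp only [AddSubgroup.coe_subtype] at hc
            rw [show φ c = -(x : B) + b from hc]; abel
          rw [hb]
          have hx0 : (φ ^ n) (x : B) = 0 := x.2
          exact (by rw [map_add, hx0, zero_add, hpow] : (φ ^ n) ((x : B) + φ c) = (φ ^ (n + 1)) c).symm
  · -- exactness at B/φ^(n+1)B
    intro y
    induction y using QuotientAddGroup.induction_on with
    | H b =>
      erw [QuotientAddGroup.map_mk, QuotientAddGroup.eq_zero_iff]
      constructor
      · rintro ⟨c, hc⟩
        refine ⟨QuotientAddGroup.mk c, ?_⟩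
        erw [QuotientAddGroup.map_mk, QuotientAddGroup.eq]
        exact ⟨0, by simp [hc]; exact map_zero (φ ^ (n + 1))⟩
      · rintro ⟨q, hq⟩
        induction q using QuotientAddGroup.induction_on with
        | H c =>
          erw [QuotientAddGroup.map_mk, QuotientAddGroup.eq] at hq
          obtain ⟨d, hd⟩ := hq
          refine ⟨c + φ d, ?_⟩
          show (φ ^ n) (c + φ d) = (AddMonoidHom.id B) b
          simp only [AddMonoidHom.id_apply]
          rw [map_add, hpow, show (φ ^ (n + 1)) d = -(φ ^ n) c + b from hd]
          abel
  · -- surjectivity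
    intro y
    induction y using QuotientAddGroup.induction_on with
    | H b =>
      exact ⟨QuotientAddGroup.mk b, by rw [QuotientAddGroup.map_mk]; rfl⟩
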